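/- (Asymptotic minimizers are ordered) Let x, y be global minimizers whose domain of crossing is finite, and suppose |x_i - y_i| → 0 as i → +∞ or as i → -∞. Then x ≥ y or y ≥ x componentwise (the domain of crossing is empty). -/

import Mathlib

open Finset Filter Topology

noncomputable def d1 (f : ℝ → ℝ → ℝ) (ν μ : ℝ) : ℝ := deriv (fun t => f t μ) ν
noncomputable def d2 (f : ℝ → ℝ → ℝ) (ν μ : ℝ) : ℝ := deriv (fun t => f ν t) μ
noncomputable def d11 (f : ℝ → ℝ → ℝ) (ν μ : ℝ) : ℝ := deriv (fun t => d1 f t μ) ν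
noncomputable def d12 (f : ℝ → ℝ → ℝ) (ν μ : ℝ) : ℝ := deriv (fun t => d2 f t μ) ν
noncomputable def d22 (f : ℝ → ℝ → ℝ) (ν μ : ℝ) : ℝ := deriv (fun t => d2 f ν t) μ

/-- The local energy at site `i` of the sequence `z`:  `S_i(z) = ∑_{j=1}^r f_j(z_i, z_{i+j})`. -/
noncomputable def siteE (r : ℕ) (f : ℕ → ℝ → ℝ → ℝ) (z : ℤ → ℝ) (i : ℤ) : ℝ :=
  ∑ j ∈ Finset.Icc 1 r, f j (z i) (z (i + j))

/-- `W_B` for the segment `B = [a,b] ⊂ ℤ`. -/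
noncomputable def Wseg (r : ℕ) (f : ℕ → ℝ → ℝ → ℝ) (a b : ℤ) (z : ℤ → ℝ) : ℝ :=
  ∑ i ∈ Finset.Icc a b, siteE r f z i

/-- A global minimizer: for every segment with interior `[a,b]` and every variation `v`
supported in `[a,b]`, the energy does not decrease. -/
def IsGlobalMin (r : ℕ) (f : ℕ → ℝ → ℝ → ℝ) (x : ℤ → ℝ) : Prop :=
  ∀ a b : ℤ, ∀ v : ℤ → ℝ, (∀ i, v i ≠ 0 → i ∈ Finset.Icc a b) →
    Wseg r f (a - r) b x ≤ Wseg r f (a - r) b (x + v)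

/-- The variational monotone recurrence relation `∑_{j=i-r}^{i} ∂_i S_j(x) = 0` at site `i`. -/
def SolvesEL (r : ℕ) (f : ℕ → ℝ → ℝ → ℝ) (x : ℤ → ℝ) (i : ℤ) : Prop :=
  (∑ j ∈ Finset.Icc 1 r, (d1 (f j) (x i) (x (i + j)) + d2 (f j) (x (i - j)) (x i))) = 0

/-- A local energy of range `r` in the sense of Definition 1.5 of the paper. -/
structure LocalEnergy (r : ℕ) (K lam : ℝ) where
  f : ℕ → ℝ → ℝ → ℝ
  smooth : ∀ j, ContDiff ℝ 2 (fun p : ℝ × ℝ => f j p.1 p.2)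
  periodic : ∀ j ν μ, f j (ν + 1) (μ + 1) = f j ν μ
  bound11 : ∀ j ν μ, |d11 (f j) ν μ| ≤ K / r
  bound12 : ∀ j ν μ, |d12 (f j) ν μ| ≤ K / r
  bound22 : ∀ j ν μ, |d22 (f j) ν μ| ≤ K / r
  coercive : ∀ j ∈ Finset.Icc 1 r, ∀ C : ℝ, ∃ R : ℝ, ∀ ν μ : ℝ, R ≤ |ν - μ| → C ≤ f j ν μ
  twist : ∀ j ∈ Finset.Icc 1 r, ∀ ν μ : ℝ, d12 (f j) ν μ ≤ -lam

/-- `x` and `y` are weakly ordered on the set `s`. -/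
def WOrd (x y : ℤ → ℝ) (s : Set ℤ) : Prop :=
  (∀ i ∈ s, x i ≤ y i) ∨ (∀ i ∈ s, y i ≤ x i)

/-- `D` is an interval outside of which (on both components of the complement)
`x` and `y` are weakly ordered. -/
def CrossProp (x y : ℤ → ℝ) (D : Set ℤ) : Prop :=
  D.OrdConnected ∧ WOrd x y {i | ∀ j ∈ D, i < j} ∧ WOrd x y {i | ∀ j ∈ D, j < i}

/-- The domain of crossing of `x` and `y`: the minimal interval `D` such that `x` and `y`
are weakly ordered on the connected components of its complement. -/
def IsCrossingDomain (x y : ℤ → ℝ) (D : Set ℤ) : Prop :=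
  CrossProp x y D ∧ ∀ D' : Set ℤ, CrossProp x y D' → D ⊆ D'

/-- The translation `(τ_{k,l} x)_i = x_{i-k} + l`. -/
def transl (k l : ℤ) (x : ℤ → ℝ) : ℤ → ℝ := fun i => x (i - k) + l

/-- The Birkhoff property. -/
def Birkhoff (x : ℤ → ℝ) : Prop :=
  ∀ k l : ℤ, (∀ i, transl k l x i ≤ x i) ∨ (∀ i, x i ≤ transl k l x i)

def UC (f : ℝ → ℝ → ℝ) : ℝ × ℝ → ℝ := fun p => f p.1 p.2

noncomputable def UC' (f : ℝ → ℝ → ℝ) : ℝ × ℝ → (ℝ × ℝ →L[ℝ] ℝ) := fun p => fderiv ℝ (UC f) p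

section CalcAux

variable {f : ℝ → ℝ → ℝ} (hf : ContDiff ℝ 2 (fun p : ℝ × ℝ => f p.1 p.2))
include hf

lemma Fu_contDiff : ContDiff ℝ 2 (UC f) := hf

lemma Fu_diff : Differentiable ℝ (UC f) := (Fu_contDiff hf).differentiable two_ne_zero

lemma hasDerivAt_fst (ν μ : ℝ) :
    HasDerivAt (fun t => f t μ) (UC' f (ν, μ) (1, 0)) ν := by
  have h1 : HasDerivAt (fun t : ℝ => (t, μ)) ((1 : ℝ), (0 : ℝ)) ν :=
    (hasDerivAt_id ν).prodMk (hasDerivAt_const ν μ)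
  have h2 : HasFDerivAt (UC f) (UC' f (ν, μ)) (ν, μ) :=
    (Fu_diff hf (ν, μ)).hasFDerivAt
  exact h2.comp_hasDerivAt ν h1

lemma hasDerivAt_snd (ν μ : ℝ) :
    HasDerivAt (fun t => f ν t) (UC' f (ν, μ) (0, 1)) μ := by
  have h1 : HasDerivAt (fun t : ℝ => (ν, t)) ((0 : ℝ), (1 : ℝ)) μ :=
    (hasDerivAt_const μ ν).prodMk (hasDerivAt_id μ)
  have h2 : HasFDerivAt (UC f) (UC' f (ν, μ)) (ν, μ) :=
    (Fu_diff hf (ν, μ)).hasFDerivAt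
  exact h2.comp_hasDerivAt μ h1

lemma d1_eq (ν μ : ℝ) : d1 f ν μ = UC' f (ν, μ) (1, 0) :=
  (hasDerivAt_fst hf ν μ).deriv

lemma d2_eq (ν μ : ℝ) : d2 f ν μ = UC' f (ν, μ) (0, 1) :=
  (hasDerivAt_snd hf ν μ).deriv

lemma hasDerivAt_d1 (ν μ : ℝ) :
    HasDerivAt (fun t => f t μ) (d1 f ν μ) ν := by
  rw [d1_eq hf]; exact hasDerivAt_fst hf ν μ

lemma hasDerivAt_d2 (ν μ : ℝ) :
    HasDerivAt (fun t => f ν t) (d2 f ν μ) μ := by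
  rw [d2_eq hf]; exact hasDerivAt_snd hf ν μ

lemma fderiv_contDiff : ContDiff ℝ 1 (UC' f) :=
  (Fu_contDiff hf).fderiv_right (le_refl _)

lemma hasDerivAt_d2_fst (μ ζ : ℝ) :
    HasDerivAt (fun s => d2 f s μ) ((fderiv ℝ (UC' f) (ζ, μ) ((1 : ℝ), (0 : ℝ))) (0, 1)) ζ := by
  have hfun : (fun s => d2 f s μ) = fun s => (UC' f (s, μ)) (0, 1) :=
    funext fun s => d2_eq hf s μ
  rw [hfun]
  have h1 : HasDerivAt (fun s : ℝ => (s, μ)) ((1 : ℝ), (0 : ℝ)) ζ :=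
    (hasDerivAt_id ζ).prodMk (hasDerivAt_const ζ μ)
  have h2 : HasFDerivAt (UC' f) (fderiv ℝ (UC' f) (ζ, μ)) (ζ, μ) :=
    (((fderiv_contDiff hf).differentiable one_ne_zero) (ζ, μ)).hasFDerivAt
  have h3 : HasDerivAt (fun s : ℝ => UC' f (s, μ))
      (fderiv ℝ (UC' f) (ζ, μ) ((1 : ℝ), (0 : ℝ))) ζ :=
    h2.comp_hasDerivAt ζ h1
  have h4 := h3.clm_apply (hasDerivAt_const ζ ((0 : ℝ), (1 : ℝ)))
  simpa using h4

lemma d12_eq (ν μ : ℝ) :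
    d12 f ν μ = (fderiv ℝ (UC' f) (ν, μ) ((1 : ℝ), (0 : ℝ))) (0, 1) :=
  (hasDerivAt_d2_fst hf μ ν).deriv

lemma hasDerivAt_d12 (μ ζ : ℝ) :
    HasDerivAt (fun s => d2 f s μ) (d12 f ζ μ) ζ := by
  rw [d12_eq hf]; exact hasDerivAt_d2_fst hf μ ζ

lemma hasDerivAt_d1_snd (ν η : ℝ) :
    HasDerivAt (fun t => d1 f ν t) (d12 f ν η) η := by
  have hfun : (fun t => d1 f ν t) = fun t => (UC' f (ν, t)) (1, 0) :=
    funext fun t => d1_eq hf ν t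
  rw [hfun]
  have h1 : HasDerivAt (fun t : ℝ => (ν, t)) ((0 : ℝ), (1 : ℝ)) η :=
    (hasDerivAt_const η ν).prodMk (hasDerivAt_id η)
  have h2 : HasFDerivAt (UC' f) (fderiv ℝ (UC' f) (ν, η)) (ν, η) :=
    (((fderiv_contDiff hf).differentiable one_ne_zero) (ν, η)).hasFDerivAt
  have h3 : HasDerivAt (fun t : ℝ => UC' f (ν, t))
      (fderiv ℝ (UC' f) (ν, η) ((0 : ℝ), (1 : ℝ))) η :=
    h2.comp_hasDerivAt η h1
  have h4 := h3.clm_apply (hasDerivAt_const η ((1 : ℝ), (0 : ℝ)))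
  have hsymm : (fderiv ℝ (UC' f) (ν, η) ((0 : ℝ), (1 : ℝ))) (1, 0)
      = (fderiv ℝ (UC' f) (ν, η) ((1 : ℝ), (0 : ℝ))) (0, 1) :=
    second_derivative_symmetric (fun p => (Fu_diff hf p).hasFDerivAt) h2 _ _
  rw [d12_eq hf, ← hsymm]
  simpa using h4

end CalcAux

lemma mono_of_deriv_le (g g' : ℝ → ℝ) (M : ℝ) (h : ∀ t, HasDerivAt g (g' t) t)
    (hM : ∀ t, g' t ≤ M) {u v : ℝ} (huv : u ≤ v) : g v - g u ≤ M * (v - u) := by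
  have hφ : ∀ t, HasDerivAt (fun t => M * t - g t) (M - g' t) t := by
    intro t
    have := ((hasDerivAt_id t).const_mul M).sub (h t)
    exact this.congr_deriv (by ring)
  have hmono : Monotone (fun t => M * t - g t) := by
    apply monotone_of_deriv_nonneg
    · exact fun t => ((hφ t).differentiableAt)
    · intro t; rw [(hφ t).deriv]; linarith [hM t]
  have := hmono huv
  simp only at this
  linarith

lemma lip_of_deriv (g g' : ℝ → ℝ) (M : ℝ) (h : ∀ t, HasDerivAt g (g' t) t)
    (hM : ∀ t, |g' t| ≤ M) (u v : ℝ) : |g v - g u| ≤ M * |v - u| := by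
  rcases le_total u v with huv | huv
  · rw [abs_of_nonneg (by linarith : (0:ℝ) ≤ v - u)]
    have h1 := mono_of_deriv_le g g' M h (fun t => (abs_le.mp (hM t)).2) huv
    have h2 := mono_of_deriv_le (fun t => -g t) (fun t => -g' t) M
      (fun t => (h t).neg) (fun t => by show -g' t ≤ M; linarith [(abs_le.mp (hM t)).1]) huv
    rw [abs_le]; constructor <;> linarith
  · rw [abs_of_nonpos (by linarith : v - u ≤ 0)]
    have h1 := mono_of_deriv_le g g' M h (fun t => (abs_le.mp (hM t)).2) huv
    have h2 := mono_of_deriv_le (fun t => -g t) (fun t => -g' t) M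
      (fun t => (h t).neg) (fun t => by show -g' t ≤ M; linarith [(abs_le.mp (hM t)).1]) huv
    rw [abs_le]; constructor <;> linarith

section Ineq

variable {f : ℝ → ℝ → ℝ} (hf : ContDiff ℝ 2 (fun p : ℝ × ℝ => f p.1 p.2))
include hf

lemma cross_ineq {lam : ℝ} (htw : ∀ ν μ, d12 f ν μ ≤ -lam)
    {a c d b : ℝ} (hac : a ≤ c) (hdb : d ≤ b) :
    f a d + f c b + lam * (c - a) * (b - d) ≤ f a b + f c d := by
  -- G t := f c t - f a t, G' t = d2 f c t - d2 f a t ≤ -lam * (c - a)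
  have hG : ∀ t, HasDerivAt (fun s => f c s - f a s) (d2 f c t - d2 f a t) t :=
    fun t => (hasDerivAt_d2 hf c t).sub (hasDerivAt_d2 hf a t)
  have hG' : ∀ t, d2 f c t - d2 f a t ≤ -lam * (c - a) := by
    intro t
    have := mono_of_deriv_le (fun s => d2 f s t) (fun s => d12 f s t) (-lam)
      (fun s => hasDerivAt_d12 hf t s) (fun s => htw s t) hac
    linarith [this]
  have key := mono_of_deriv_le (fun s => f c s - f a s) (fun t => d2 f c t - d2 f a t)
    (-lam * (c - a)) hG hG' hdb
  nlinarith [key]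

lemma swap_ineq {C : ℝ} (hC : 0 ≤ C) (hbd : ∀ ν μ, |d12 f ν μ| ≤ C)
    (a c d b : ℝ) :
    f a d + f c b ≤ f a b + f c d + C * |a - c| * |b - d| := by
  have hG : ∀ t, HasDerivAt (fun s => f c s - f a s) (d2 f c t - d2 f a t) t :=
    fun t => (hasDerivAt_d2 hf c t).sub (hasDerivAt_d2 hf a t)
  have hG' : ∀ t, |d2 f c t - d2 f a t| ≤ C * |a - c| := by
    intro t
    have := lip_of_deriv (fun s => d2 f s t) (fun s => d12 f s t) C
      (fun s => hasDerivAt_d12 hf t s) (fun s => hbd s t) a c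
    rwa [abs_sub_comm c a] at this
  have key := lip_of_deriv (fun s => f c s - f a s) (fun t => d2 f c t - d2 f a t)
    (C * |a - c|) hG hG' d b
  have h2 := (abs_le.mp key).2
  linarith

lemma minmax_ineq {lam : ℝ} (hlam : 0 < lam) (htw : ∀ ν μ, d12 f ν μ ≤ -lam)
    (u1 u2 w1 w2 : ℝ) :
    f (min u1 w1) (min u2 w2) + f (max u1 w1) (max u2 w2) ≤ f u1 u2 + f w1 w2 := by
  rcases le_total u1 w1 with h1 | h1 <;> rcases le_total u2 w2 with h2 | h2
  · rw [min_eq_left h1, min_eq_left h2, max_eq_right h1, max_eq_right h2]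
  · rw [min_eq_left h1, min_eq_right h2, max_eq_right h1, max_eq_left h2]
    have := cross_ineq hf htw h1 h2
    nlinarith [mul_nonneg (mul_nonneg hlam.le (sub_nonneg.mpr h1)) (sub_nonneg.mpr h2)]
  · rw [min_eq_right h1, min_eq_left h2, max_eq_left h1, max_eq_right h2]
    have := cross_ineq hf htw h1 h2
    nlinarith [mul_nonneg (mul_nonneg hlam.le (sub_nonneg.mpr h1)) (sub_nonneg.mpr h2)]
  · rw [min_eq_right h1, min_eq_right h2, max_eq_left h1, max_eq_left h2]
    linarith

end Ineq

-- localization of energy differences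
lemma Wseg_localize (r : ℕ) (f : ℕ → ℝ → ℝ → ℝ) {a b : ℤ} (z w : ℤ → ℝ)
    (hw : ∀ i, w i ≠ 0 → i ∈ Finset.Icc a b) {A B : ℤ} (hA : A ≤ a - r) (hB : b ≤ B) :
    Wseg r f A B (z + w) - Wseg r f A B z
      = Wseg r f (a - r) b (z + w) - Wseg r f (a - r) b z := by
  have hsub : Finset.Icc (a - r) b ⊆ Finset.Icc A B := Finset.Icc_subset_Icc hA hB
  have hzero : ∀ i ∈ Finset.Icc A B, i ∉ Finset.Icc (a - r) b →
      siteE r f (z + w) i - siteE r f z i = 0 := by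
    intro i _ hi
    have hi' : i < a - r ∨ b < i := by
      rcases Finset.mem_Icc.not.mp hi with h
      omega
    have hw0 : ∀ k : ℤ, (i = k ∨ (∃ j : ℕ, j ≤ r ∧ k = i + j)) → w k = 0 := by
      intro k hk
      by_contra hne
      have := Finset.mem_Icc.mp (hw k hne)
      rcases hk with rfl | ⟨j, hj, rfl⟩ <;> omega
    have : siteE r f (z + w) i = siteE r f z i := by
      unfold siteE
      apply Finset.sum_congr rfl
      intro j hj
      have hj' := Finset.mem_Icc.mp hj
      have h1 : w i = 0 := hw0 i (Or.inl rfl)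
      have h2 : w (i + j) = 0 := hw0 (i + j) (Or.inr ⟨j, hj'.2, rfl⟩)
      simp [Pi.add_apply, h1, h2]
    rw [this, sub_self]
  unfold Wseg
  rw [← Finset.sum_sub_distrib, ← Finset.sum_sub_distrib]
  exact (Finset.sum_subset hsub hzero).symm




-- derivative of a single two-variable term along a linear perturbation
lemma hasDerivAt_term {f : ℝ → ℝ → ℝ} (hf : ContDiff ℝ 2 (fun p : ℝ × ℝ => f p.1 p.2))
    (u w a b : ℝ) :
    HasDerivAt (fun t : ℝ => f (u + a * t) (w + b * t))
      (a * d1 f u w + b * d2 f u w) 0 := by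
  have h1 : HasDerivAt (fun t : ℝ => (u + a * t, w + b * t)) ((a, b) : ℝ × ℝ) 0 := by
    have ha : HasDerivAt (fun t : ℝ => u + a * t) a 0 := by
      simpa using ((hasDerivAt_id (0:ℝ)).const_mul a).const_add u
    have hb : HasDerivAt (fun t : ℝ => w + b * t) b 0 := by
      simpa using ((hasDerivAt_id (0:ℝ)).const_mul b).const_add w
    exact ha.prodMk hb
  have h2 : HasFDerivAt (UC f) (UC' f (u + a * 0, w + b * 0)) (u + a * 0, w + b * 0) :=
    (Fu_diff hf _).hasFDerivAt
  have h3 := h2.comp_hasDerivAt 0 h1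
  have heval : (UC' f (u + a * 0, w + b * 0)) ((a, b) : ℝ × ℝ)
      = a * d1 f u w + b * d2 f u w := by
    have hab : ((a, b) : ℝ × ℝ) = a • ((1:ℝ), (0:ℝ)) + b • ((0:ℝ), (1:ℝ)) := by
      simp [Prod.ext_iff]
    have hpt : (u + a * 0, w + b * 0) = ((u, w) : ℝ × ℝ) := by norm_num
    rw [hpt, hab, map_add, map_smul, map_smul, d1_eq hf, d2_eq hf]
    simp [smul_eq_mul]
  rw [← heval]
  exact h3

lemma el_of_min (r : ℕ) (hr : 1 ≤ r) (f : ℕ → ℝ → ℝ → ℝ)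
    (hsm : ∀ j, ContDiff ℝ 2 (fun p : ℝ × ℝ => f j p.1 p.2))
    (z : ℤ → ℝ) (hz : IsGlobalMin r f z) (i : ℤ) :
    ∑ j ∈ Finset.Icc 1 r, (d1 (f j) (z i) (z (i + j)) + d2 (f j) (z (i - j)) (z i)) = 0 := by
  classical
  set G : ℝ → ℝ := fun t =>
    ∑ k ∈ Finset.Icc (i - r) i, ∑ j ∈ Finset.Icc 1 r,
      f j (z k + (if k = i then (1:ℝ) else 0) * t)
          (z (k + j) + (if k + (j:ℤ) = i then (1:ℝ) else 0) * t) with hG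
  have hGW : ∀ t, G t = Wseg r f (i - r) i (z + fun k => if k = i then t else 0) := by
    intro t
    unfold Wseg siteE
    apply Finset.sum_congr rfl
    intro k _
    apply Finset.sum_congr rfl
    intro j _
    have e1 : (z + fun k => if k = i then t else 0) k
        = z k + (if k = i then (1:ℝ) else 0) * t := by
      by_cases h : k = i <;> simp [h]
    have e2 : (z + fun k => if k = i then t else 0) (k + (j:ℤ))
        = z (k + (j:ℤ)) + (if k + (j:ℤ) = i then (1:ℝ) else 0) * t := by
      by_cases h : k + (j:ℤ) = i <;> simp [h]
    rw [e1, e2]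
  have hmin : ∀ t, G 0 ≤ G t := by
    intro t
    have h0 : G 0 = Wseg r f (i - r) i z := by
      rw [hGW 0]
      congr 1
      funext k
      simp
    have ht := hz i i (fun k => if k = i then t else 0) (by
      intro k hk
      simp only [ne_eq, ite_eq_right_iff, not_forall] at hk
      obtain ⟨rfl, -⟩ := hk
      simp)
    rw [h0, hGW t]
    exact ht
  have hd : HasDerivAt G
      (∑ k ∈ Finset.Icc (i - r) i, ∑ j ∈ Finset.Icc 1 r,
        ((if k = i then (1:ℝ) else 0) * d1 (f j) (z k) (z (k + j))
          + (if k + (j:ℤ) = i then (1:ℝ) else 0) * d2 (f j) (z k) (z (k + j)))) 0 := by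
    apply HasDerivAt.fun_sum
    intro k _
    apply HasDerivAt.fun_sum
    intro j _
    exact hasDerivAt_term (hsm j) (z k) (z (k + j)) _ _
  have hzero : deriv G 0 = 0 := by
    have hloc : IsLocalMin G 0 := Filter.Eventually.of_forall hmin
    exact hloc.deriv_eq_zero
  have hval := hd.deriv
  rw [hzero] at hval
  -- now simplify the sum
  have hsplit : (∑ k ∈ Finset.Icc (i - r) i, ∑ j ∈ Finset.Icc 1 r,
        ((if k = i then (1:ℝ) else 0) * d1 (f j) (z k) (z (k + j))
          + (if k + (j:ℤ) = i then (1:ℝ) else 0) * d2 (f j) (z k) (z (k + j))))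
      = ∑ j ∈ Finset.Icc 1 r, (d1 (f j) (z i) (z (i + j)) + d2 (f j) (z (i - j)) (z i)) := by
    rw [Finset.sum_congr rfl (fun k _ => Finset.sum_add_distrib)]
    rw [Finset.sum_add_distrib]
    have hA : (∑ k ∈ Finset.Icc (i - r) i, ∑ j ∈ Finset.Icc 1 r,
        (if k = i then (1:ℝ) else 0) * d1 (f j) (z k) (z (k + j)))
        = ∑ j ∈ Finset.Icc 1 r, d1 (f j) (z i) (z (i + j)) := by
      have : ∀ k ∈ Finset.Icc (i - r) i, (∑ j ∈ Finset.Icc 1 r,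
          (if k = i then (1:ℝ) else 0) * d1 (f j) (z k) (z (k + j)))
          = if k = i then (∑ j ∈ Finset.Icc 1 r, d1 (f j) (z k) (z (k + j))) else 0 := by
        intro k _
        by_cases h : k = i <;> simp [h]
      rw [Finset.sum_congr rfl this, Finset.sum_ite_eq' (Finset.Icc (i - r) i) i
        (fun k => ∑ j ∈ Finset.Icc 1 r, d1 (f j) (z k) (z (k + j)))]
      have : i ∈ Finset.Icc (i - r) i := by
        rw [Finset.mem_Icc]; omega
      simp [this]
    have hB : (∑ k ∈ Finset.Icc (i - r) i, ∑ j ∈ Finset.Icc 1 r,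
        (if k + (j:ℤ) = i then (1:ℝ) else 0) * d2 (f j) (z k) (z (k + j)))
        = ∑ j ∈ Finset.Icc 1 r, d2 (f j) (z (i - j)) (z i) := by
      rw [Finset.sum_comm]
      apply Finset.sum_congr rfl
      intro j hj
      have hj' := Finset.mem_Icc.mp hj
      have hmem : i - (j:ℤ) ∈ Finset.Icc (i - r) i := by
        rw [Finset.mem_Icc]
        have h1 : (1:ℤ) ≤ (j:ℤ) := by exact_mod_cast hj'.1
        have h2 : (j:ℤ) ≤ (r:ℤ) := by exact_mod_cast hj'.2
        omega
      have hcongr : ∀ k ∈ Finset.Icc (i - r) i,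
          (if k + (j:ℤ) = i then (1:ℝ) else 0) * d2 (f j) (z k) (z (k + j))
          = if k = i - (j:ℤ) then d2 (f j) (z k) (z (k + j)) else 0 := by
        intro k _
        have : (k + (j:ℤ) = i) ↔ (k = i - (j:ℤ)) := by omega
        by_cases h : k = i - (j:ℤ)
        · simp [h, this.mpr h]
        · have : ¬ (k + (j:ℤ) = i) := fun hc => h (this.mp hc)
          simp [h, this]
      rw [Finset.sum_congr rfl hcongr, Finset.sum_ite_eq' (Finset.Icc (i - r) i) (i - (j:ℤ))
        (fun k => d2 (f j) (z k) (z (k + j)))]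
      simp only [hmem, if_true]
      have harg : i - (j:ℤ) + (j:ℤ) = i := by ring
      rw [harg]
    rw [hA, hB, ← Finset.sum_add_distrib]
  rw [hsplit] at hval
  exact hval.symm

-- d1 f c · is "strongly decreasing": for b ≤ a
lemma d1_mono {f : ℝ → ℝ → ℝ} (hf : ContDiff ℝ 2 (fun p : ℝ × ℝ => f p.1 p.2))
    {lam : ℝ} (htw : ∀ ν μ, d12 f ν μ ≤ -lam) (c : ℝ) {b a : ℝ} (hba : b ≤ a) :
    d1 f c a - d1 f c b ≤ -lam * (a - b) :=
  mono_of_deriv_le (fun t => d1 f c t) (fun t => d12 f c t) (-lam)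
    (fun t => hasDerivAt_d1_snd hf c t) (fun t => htw c t) hba

lemma d2_mono {f : ℝ → ℝ → ℝ} (hf : ContDiff ℝ 2 (fun p : ℝ × ℝ => f p.1 p.2))
    {lam : ℝ} (htw : ∀ ν μ, d12 f ν μ ≤ -lam) (c : ℝ) {b a : ℝ} (hba : b ≤ a) :
    d2 f a c - d2 f b c ≤ -lam * (a - b) :=
  mono_of_deriv_le (fun s => d2 f s c) (fun s => d12 f s c) (-lam)
    (fun s => hasDerivAt_d12 hf c s) (fun s => htw s c) hba

-- strong maximum principle step
lemma touch_step (r : ℕ) (hr : 1 ≤ r) (lam : ℝ) (hlam : 0 < lam)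
    (f : ℕ → ℝ → ℝ → ℝ)
    (hsm : ∀ j, ContDiff ℝ 2 (fun p : ℝ × ℝ => f j p.1 p.2))
    (htw : ∀ j ∈ Finset.Icc 1 r, ∀ ν μ : ℝ, d12 (f j) ν μ ≤ -lam)
    (x m : ℤ → ℝ)
    (hxEL : ∀ i, ∑ j ∈ Finset.Icc 1 r, (d1 (f j) (x i) (x (i + j)) + d2 (f j) (x (i - j)) (x i)) = 0)
    (hmEL : ∀ i, ∑ j ∈ Finset.Icc 1 r, (d1 (f j) (m i) (m (i + j)) + d2 (f j) (m (i - j)) (m i)) = 0)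
    (hle : ∀ i, m i ≤ x i) {k : ℤ} (hk : x k = m k) :
    ∀ j ∈ Finset.Icc 1 r, x (k + (j:ℤ)) = m (k + (j:ℤ)) ∧ x (k - (j:ℤ)) = m (k - (j:ℤ)) := by
  classical
  set T : ℕ → ℝ := fun j =>
    (d1 (f j) (x k) (x (k + (j:ℤ))) + d2 (f j) (x (k - (j:ℤ))) (x k))
    - (d1 (f j) (m k) (m (k + (j:ℤ))) + d2 (f j) (m (k - (j:ℤ))) (m k)) with hT
  have hsum : ∑ j ∈ Finset.Icc 1 r, T j = 0 := by
    rw [hT]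
    rw [Finset.sum_sub_distrib]
    rw [hxEL k, hmEL k, sub_zero]
  have hbound : ∀ j ∈ Finset.Icc 1 r,
      T j ≤ -lam * (x (k + (j:ℤ)) - m (k + (j:ℤ))) + -lam * (x (k - (j:ℤ)) - m (k - (j:ℤ))) := by
    intro j hj
    have h1 : d1 (f j) (x k) (x (k + (j:ℤ))) - d1 (f j) (m k) (m (k + (j:ℤ)))
        ≤ -lam * (x (k + (j:ℤ)) - m (k + (j:ℤ))) := by
      rw [hk]
      exact d1_mono (hsm j) (htw j hj) (m k) (hle (k + (j:ℤ)))
    have h2 : d2 (f j) (x (k - (j:ℤ))) (x k) - d2 (f j) (m (k - (j:ℤ))) (m k)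
        ≤ -lam * (x (k - (j:ℤ)) - m (k - (j:ℤ))) := by
      rw [hk]
      exact d2_mono (hsm j) (htw j hj) (m k) (hle (k - (j:ℤ)))
    rw [hT]
    dsimp only
    linarith
  have hnonpos : ∀ j ∈ Finset.Icc 1 r, T j ≤ 0 := by
    intro j hj
    have := hbound j hj
    have g1 := hle (k + (j:ℤ))
    have g2 := hle (k - (j:ℤ))
    nlinarith
  have hzero : ∀ j ∈ Finset.Icc 1 r, T j = 0 := by
    intro j hj
    have := (Finset.sum_eq_zero_iff_of_nonpos hnonpos).mp hsum
    exact this j hj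
  intro j hj
  have hz := hzero j hj
  have hb := hbound j hj
  have g1 := hle (k + (j:ℤ))
  have g2 := hle (k - (j:ℤ))
  constructor <;> nlinarith

lemma touch_all (r : ℕ) (hr : 1 ≤ r) (lam : ℝ) (hlam : 0 < lam)
    (f : ℕ → ℝ → ℝ → ℝ)
    (hsm : ∀ j, ContDiff ℝ 2 (fun p : ℝ × ℝ => f j p.1 p.2))
    (htw : ∀ j ∈ Finset.Icc 1 r, ∀ ν μ : ℝ, d12 (f j) ν μ ≤ -lam)
    (x m : ℤ → ℝ)
    (hxEL : ∀ i, ∑ j ∈ Finset.Icc 1 r, (d1 (f j) (x i) (x (i + j)) + d2 (f j) (x (i - j)) (x i)) = 0)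
    (hmEL : ∀ i, ∑ j ∈ Finset.Icc 1 r, (d1 (f j) (m i) (m (i + j)) + d2 (f j) (m (i - j)) (m i)) = 0)
    (hle : ∀ i, m i ≤ x i) {k : ℤ} (hk : x k = m k) : ∀ i, x i = m i := by
  have h1 : (1:ℕ) ∈ Finset.Icc 1 r := by rw [Finset.mem_Icc]; omega
  have step : ∀ k' : ℤ, x k' = m k' → x (k' + 1) = m (k' + 1) ∧ x (k' - 1) = m (k' - 1) := by
    intro k' hk'
    have := touch_step r hr lam hlam f hsm htw x m hxEL hmEL hle hk' 1 h1
    simpa using this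
  have fwd : ∀ n : ℕ, x (k + n) = m (k + n) := by
    intro n
    induction n with
    | zero => simpa using hk
    | succ n ih =>
        have := (step (k + n) ih).1
        have harg : (k + (n:ℤ)) + 1 = k + ((n:ℕ) + 1 : ℕ) := by push_cast; ring
        rwa [harg] at this
  have bwd : ∀ n : ℕ, x (k - n) = m (k - n) := by
    intro n
    induction n with
    | zero => simpa using hk
    | succ n ih =>
        have := (step (k - n) ih).2
        have harg : (k - (n:ℤ)) - 1 = k - ((n:ℕ) + 1 : ℕ) := by push_cast; ring
        rwa [harg] at this
  intro i
  rcases le_total k i with h | h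
  · have : i = k + ((i - k).toNat : ℤ) := by omega
    rw [this]
    exact fwd _
  · have : i = k - ((k - i).toNat : ℤ) := by omega
    rw [this]
    exact bwd _

lemma walk_up (s : ℤ → ℝ) (h0 : ∀ i, s i ≠ 0) :
    ∀ n : ℕ, ∀ a : ℤ, s a < 0 → 0 < s (a + n) → ∃ c : ℤ, s c * s (c + 1) < 0 := by
  intro n
  induction n with
  | zero =>
      intro a ha hpos
      simp at hpos
      linarith
  | succ n ih =>
      intro a ha hpos
      rcases lt_trichotomy (s (a + 1)) 0 with h | h | h
      · have harg : (a + 1) + (n:ℤ) = a + ((n:ℕ) + 1 : ℕ) := by push_cast; ring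
        exact ih (a + 1) h (by rw [harg]; exact hpos)
      · exact absurd h (h0 (a + 1))
      · exact ⟨a, mul_neg_of_neg_of_pos ha h⟩

lemma walk_exists (s : ℤ → ℝ) (h0 : ∀ i, s i ≠ 0) {i1 i2 : ℤ}
    (h1 : s i1 < 0) (h2 : 0 < s i2) : ∃ c : ℤ, s c * s (c + 1) < 0 := by
  rcases le_total i1 i2 with h | h
  · have : i2 = i1 + ((i2 - i1).toNat : ℤ) := by omega
    exact walk_up s h0 (i2 - i1).toNat i1 h1 (by rw [← this]; exact h2)
  · -- i2 ≤ i1 : use -s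
    have h0' : ∀ i, (fun i => -s i) i ≠ 0 := fun i => by simp [h0 i]
    have := walk_up (fun i => -s i) h0' (i1 - i2).toNat i2 (by simpa using h2)
      (by
        have : i1 = i2 + ((i1 - i2).toNat : ℤ) := by omega
        rw [← this]
        simpa using h1)
    obtain ⟨c, hc⟩ := this
    exact ⟨c, by simpa [neg_mul_neg] using hc⟩

set_option maxHeartbeats 2000000 in
theorem master (r : ℕ) (hr : 1 ≤ r) (K lam : ℝ) (hK : 0 < K) (hlam : 0 < lam)
  (f : ℕ → ℝ → ℝ → ℝ)
  (hsm : ∀ j, ContDiff ℝ 2 (fun p : ℝ × ℝ => f j p.1 p.2))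
  (hbd : ∀ j ν μ, |d12 (f j) ν μ| ≤ K / r)
  (htw : ∀ j ∈ Finset.Icc 1 r, ∀ ν μ : ℝ, d12 (f j) ν μ ≤ -lam)
  (x y : ℤ → ℝ) (hx : IsGlobalMin r f x) (hy : IsGlobalMin r f y)
  (bm bM : ℤ → ℝ) (hb : (bm = x ∧ bM = y) ∨ (bm = y ∧ bM = x))
  (S : ℤ → Prop) (inst : DecidablePred S) (ε : ℝ) (hε : 0 ≤ ε)
  (hsuppm : ({i : ℤ | S i ∧ min (x i) (y i) ≠ bm i}).Finite)
  (hsuppM : ({i : ℤ | S i ∧ max (x i) (y i) ≠ bM i}).Finite)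
  (hmix : ∀ (i : ℤ) (j : ℕ), j ∈ Finset.Icc 1 r → ¬(S i ↔ S (i + (j:ℤ))) →
      |x i - y i| ≤ ε ∧ |x (i + (j:ℤ)) - y (i + (j:ℤ))| ≤ ε)
  (T : Finset ℤ) (hT : T.card ≤ r)
  (hTs : ∀ (i : ℤ) (j : ℕ), j ∈ Finset.Icc 1 r → ¬(S i ↔ S (i + (j:ℤ))) → i ∈ T) :
    (∀ a b : ℤ, ∀ w : ℤ → ℝ, (∀ i, w i ≠ 0 → i ∈ Finset.Icc a b) →
      (∀ i : ℤ, a - r ≤ i → i ≤ b + r → S i) →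
      Wseg r f (a - r) b (fun i => min (x i) (y i))
        ≤ Wseg r f (a - r) b ((fun i => min (x i) (y i)) + w) + K * r * ε * ε)
    ∧ (∀ (i0 : ℤ) (j0 : ℕ), j0 ∈ Finset.Icc 1 r → S i0 → S (i0 + (j0:ℤ)) →
      (x i0 - y i0) * (x (i0 + (j0:ℤ)) - y (i0 + (j0:ℤ))) < 0 →
      lam * |x i0 - y i0| * |x (i0 + (j0:ℤ)) - y (i0 + (j0:ℤ))| ≤ K * r * ε * ε) := by
  classical
  have hrR : (0:ℝ) < (r:ℝ) := by exact_mod_cast hr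
  have hCr : (0:ℝ) ≤ K / r := le_of_lt (div_pos hK hrR)
  set m : ℤ → ℝ := fun i => min (x i) (y i) with hm
  set Mx : ℤ → ℝ := fun i => max (x i) (y i) with hMx
  set m' : ℤ → ℝ := fun i => if S i then m i else bm i with hm'
  set M' : ℤ → ℝ := fun i => if S i then Mx i else bM i with hM'
  have pair_id : ∀ k : ℤ, (m k = x k ∧ Mx k = y k) ∨ (m k = y k ∧ Mx k = x k) := by
    intro k
    rcases le_total (x k) (y k) with h | h
    · exact Or.inl ⟨min_eq_left h, max_eq_right h⟩
    · exact Or.inr ⟨min_eq_right h, max_eq_left h⟩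
  -- the error weight
  set e : ℤ → ℕ → ℝ := fun i j => if (S i ↔ S (i + (j:ℤ))) then 0 else K / r * ε * ε with he
  have he_nonneg : ∀ i j, 0 ≤ e i j := by
    intro i j
    rw [he]
    dsimp only
    split
    · exact le_refl 0
    · positivity
  -- termwise inequality
  have Hterm : ∀ (i : ℤ) (j : ℕ), j ∈ Finset.Icc 1 r →
      f j (m' i) (m' (i + (j:ℤ))) + f j (M' i) (M' (i + (j:ℤ)))
        ≤ f j (x i) (x (i + (j:ℤ))) + f j (y i) (y (i + (j:ℤ))) + e i j := by
    intro i j hj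
    by_cases hSi : S i <;> by_cases hSj : S (i + (j:ℤ))
    · -- both in S : exchange inequality
      have hiff : S i ↔ S (i + (j:ℤ)) := iff_of_true hSi hSj
      have he0 : e i j = 0 := by rw [he]; simp [hiff]
      rw [he0, add_zero]
      have : m' i = m i ∧ m' (i + (j:ℤ)) = m (i + (j:ℤ))
          ∧ M' i = Mx i ∧ M' (i + (j:ℤ)) = Mx (i + (j:ℤ)) := by
        rw [hm', hM']
        simp [hSi, hSj]
      rw [this.1, this.2.1, this.2.2.1, this.2.2.2]
      exact minmax_ineq (hsm j) hlam (htw j hj) (x i) (x (i + (j:ℤ))) (y i) (y (i + (j:ℤ)))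
    · -- straddle : i in S, i+j not
      have hniff : ¬(S i ↔ S (i + (j:ℤ))) := by
        intro hiff; exact hSj (hiff.mp hSi)
      have heval : e i j = K / r * ε * ε := by rw [he]; simp [hniff]
      have hmixv := hmix i j hj hniff
      have h1 : m' i = m i := by rw [hm']; simp [hSi]
      have h2 : M' i = Mx i := by rw [hM']; simp [hSi]
      have h3 : m' (i + (j:ℤ)) = bm (i + (j:ℤ)) := by rw [hm']; simp [hSj]
      have h4 : M' (i + (j:ℤ)) = bM (i + (j:ℤ)) := by rw [hM']; simp [hSj]
      rw [h1, h2, h3, h4, heval]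
      rcases hb with ⟨hb1, hb2⟩ | ⟨hb1, hb2⟩ <;> rw [hb1, hb2] <;>
        rcases pair_id i with ⟨e1, e2⟩ | ⟨e1, e2⟩ <;> rw [e1, e2]
      · -- m i = x i, bases (x,y) : exact
        have : (0:ℝ) ≤ K / r * ε * ε := by positivity
        linarith
      · -- m i = y i, bases (x,y) : swap
        have hsw := swap_ineq (hsm j) hCr (hbd j) (y i) (x i) (x (i + (j:ℤ))) (y (i + (j:ℤ)))
        have habs : K / r * |y i - x i| * |y (i + (j:ℤ)) - x (i + (j:ℤ))| ≤ K / r * ε * ε := by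
          rw [abs_sub_comm (y i) (x i), abs_sub_comm (y (i + (j:ℤ))) (x (i + (j:ℤ)))]
          have := mul_le_mul (mul_le_mul_of_nonneg_left hmixv.1 hCr) hmixv.2
            (abs_nonneg _) (by positivity)
          linarith
        linarith
      · -- m i = x i, bases (y,x) : swap
        have hsw := swap_ineq (hsm j) hCr (hbd j) (x i) (y i) (y (i + (j:ℤ))) (x (i + (j:ℤ)))
        have habs : K / r * |x i - y i| * |x (i + (j:ℤ)) - y (i + (j:ℤ))| ≤ K / r * ε * ε := by
          have := mul_le_mul (mul_le_mul_of_nonneg_left hmixv.1 hCr) hmixv.2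
            (abs_nonneg _) (by positivity)
          linarith
        linarith
      · -- m i = y i, bases (y,x) : exact
        have : (0:ℝ) ≤ K / r * ε * ε := by positivity
        linarith
    · -- straddle : i not in S, i+j in S
      have hniff : ¬(S i ↔ S (i + (j:ℤ))) := by
        intro hiff; exact hSi (hiff.mpr hSj)
      have heval : e i j = K / r * ε * ε := by rw [he]; simp [hniff]
      have hmixv := hmix i j hj hniff
      have h1 : m' i = bm i := by rw [hm']; simp [hSi]
      have h2 : M' i = bM i := by rw [hM']; simp [hSi]
      have h3 : m' (i + (j:ℤ)) = m (i + (j:ℤ)) := by rw [hm']; simp [hSj]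
      have h4 : M' (i + (j:ℤ)) = Mx (i + (j:ℤ)) := by rw [hM']; simp [hSj]
      rw [h1, h2, h3, h4, heval]
      rcases hb with ⟨hb1, hb2⟩ | ⟨hb1, hb2⟩ <;> rw [hb1, hb2] <;>
        rcases pair_id (i + (j:ℤ)) with ⟨e1, e2⟩ | ⟨e1, e2⟩ <;> rw [e1, e2]
      · have : (0:ℝ) ≤ K / r * ε * ε := by positivity
        linarith
      · have hsw := swap_ineq (hsm j) hCr (hbd j) (x i) (y i) (y (i + (j:ℤ))) (x (i + (j:ℤ)))
        have habs : K / r * |x i - y i| * |x (i + (j:ℤ)) - y (i + (j:ℤ))| ≤ K / r * ε * ε := by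
          have := mul_le_mul (mul_le_mul_of_nonneg_left hmixv.1 hCr) hmixv.2
            (abs_nonneg _) (by positivity)
          linarith
        linarith
      · have hsw := swap_ineq (hsm j) hCr (hbd j) (y i) (x i) (x (i + (j:ℤ))) (y (i + (j:ℤ)))
        have habs : K / r * |y i - x i| * |y (i + (j:ℤ)) - x (i + (j:ℤ))| ≤ K / r * ε * ε := by
          rw [abs_sub_comm (y i) (x i), abs_sub_comm (y (i + (j:ℤ))) (x (i + (j:ℤ)))]
          have := mul_le_mul (mul_le_mul_of_nonneg_left hmixv.1 hCr) hmixv.2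
            (abs_nonneg _) (by positivity)
          linarith
        linarith
      · have : (0:ℝ) ≤ K / r * ε * ε := by positivity
        linarith
    · -- both outside S
      have hiff : S i ↔ S (i + (j:ℤ)) := iff_of_false hSi hSj
      have he0 : e i j = 0 := by rw [he]; simp [hiff]
      have h1 : m' i = bm i := by rw [hm']; simp [hSi]
      have h2 : M' i = bM i := by rw [hM']; simp [hSi]
      have h3 : m' (i + (j:ℤ)) = bm (i + (j:ℤ)) := by rw [hm']; simp [hSj]
      have h4 : M' (i + (j:ℤ)) = bM (i + (j:ℤ)) := by rw [hM']; simp [hSj]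
      rw [he0, add_zero, h1, h2, h3, h4]
      rcases hb with ⟨hb1, hb2⟩ | ⟨hb1, hb2⟩ <;> rw [hb1, hb2] <;> linarith

  -- total error bound over any window
  have herr_sum : ∀ W : Finset ℤ, ∑ i ∈ W, ∑ j ∈ Finset.Icc 1 r, e i j ≤ K * r * ε * ε := by
    intro W
    have hc : (0:ℝ) ≤ K / r * ε * ε := by positivity
    have hinner : ∀ i : ℤ, ∑ j ∈ Finset.Icc 1 r, e i j
        ≤ (if i ∈ T then (r:ℝ) * (K / r * ε * ε) else 0) := by
      intro i
      by_cases hi : i ∈ T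
      · rw [if_pos hi]
        have : ∑ j ∈ Finset.Icc 1 r, e i j ≤ ∑ _j ∈ Finset.Icc 1 r, (K / r * ε * ε) := by
          apply Finset.sum_le_sum
          intro j _
          rw [he]
          dsimp only
          split
          · exact hc
          · exact le_refl _
        have hcard : (Finset.Icc 1 r).card = r := by
          rw [Nat.card_Icc]
          omega
        rw [Finset.sum_const, hcard] at this
        simpa [nsmul_eq_mul] using this
      · rw [if_neg hi]
        apply le_of_eq
        apply Finset.sum_eq_zero
        intro j hj
        have hiff : S i ↔ S (i + (j:ℤ)) := by
          by_contra hn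
          exact hi (hTs i j hj hn)
        rw [he]
        simp [hiff]
    have h2 : ∑ i ∈ W, ∑ j ∈ Finset.Icc 1 r, e i j
        ≤ ∑ i ∈ W, (if i ∈ T then (r:ℝ) * (K / r * ε * ε) else 0) :=
      Finset.sum_le_sum (fun i _ => hinner i)
    have h3 : ∑ i ∈ W, (if i ∈ T then (r:ℝ) * (K / r * ε * ε) else 0)
        = ((W.filter (· ∈ T)).card : ℝ) * ((r:ℝ) * (K / r * ε * ε)) := by
      rw [← Finset.sum_filter, Finset.sum_const, nsmul_eq_mul]
    have h4 : ((W.filter (· ∈ T)).card : ℝ) ≤ (r : ℝ) := by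
      have hsub : W.filter (· ∈ T) ⊆ T := by
        intro i hi
        exact (Finset.mem_filter.mp hi).2
      have := le_trans (Finset.card_le_card hsub) hT
      exact_mod_cast this
    have h5 : ((W.filter (· ∈ T)).card : ℝ) * ((r:ℝ) * (K / r * ε * ε))
        ≤ (r:ℝ) * ((r:ℝ) * (K / r * ε * ε)) := by
      apply mul_le_mul_of_nonneg_right h4
      positivity
    have h6 : (r:ℝ) * ((r:ℝ) * (K / r * ε * ε)) = K * r * ε * ε := by
      field_simp
    linarith
  -- Wseg as a double sum
  have hW : ∀ (A B : ℤ) (z : ℤ → ℝ), Wseg r f A B z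
      = ∑ i ∈ Finset.Icc A B, ∑ j ∈ Finset.Icc 1 r, f j (z i) (z (i + (j:ℤ))) := by
    intro A B z
    rfl
  have hbm_min : IsGlobalMin r f bm := by
    rcases hb with ⟨h1, _⟩ | ⟨h1, _⟩ <;> rw [h1] <;> assumption
  have hbM_min : IsGlobalMin r f bM := by
    rcases hb with ⟨_, h1⟩ | ⟨_, h1⟩ <;> rw [h1] <;> assumption
  have hxy : ∀ (A B : ℤ), Wseg r f A B x + Wseg r f A B y
      = Wseg r f A B bm + Wseg r f A B bM := by
    intro A B
    rcases hb with ⟨h1, h2⟩ | ⟨h1, h2⟩ <;> rw [h1, h2]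
    ring
  -- key summed inequality
  have KeySum : ∀ (A B : ℤ), Wseg r f A B m' + Wseg r f A B M'
      ≤ Wseg r f A B x + Wseg r f A B y + K * r * ε * ε := by
    intro A B
    have h1 : ∑ i ∈ Finset.Icc A B, ∑ j ∈ Finset.Icc 1 r,
        (f j (m' i) (m' (i + (j:ℤ))) + f j (M' i) (M' (i + (j:ℤ))))
        ≤ ∑ i ∈ Finset.Icc A B, ∑ j ∈ Finset.Icc 1 r,
        (f j (x i) (x (i + (j:ℤ))) + f j (y i) (y (i + (j:ℤ))) + e i j) :=
      Finset.sum_le_sum (fun i _ => Finset.sum_le_sum (fun j hj => Hterm i j hj))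
    have h2 : ∑ i ∈ Finset.Icc A B, ∑ j ∈ Finset.Icc 1 r,
        (f j (m' i) (m' (i + (j:ℤ))) + f j (M' i) (M' (i + (j:ℤ))))
        = Wseg r f A B m' + Wseg r f A B M' := by
      rw [hW, hW, ← Finset.sum_add_distrib]
      apply Finset.sum_congr rfl
      intro i _
      rw [← Finset.sum_add_distrib]
    have h3 : ∑ i ∈ Finset.Icc A B, ∑ j ∈ Finset.Icc 1 r,
        (f j (x i) (x (i + (j:ℤ))) + f j (y i) (y (i + (j:ℤ))) + e i j)
        = Wseg r f A B x + Wseg r f A B y + ∑ i ∈ Finset.Icc A B, ∑ j ∈ Finset.Icc 1 r, e i j := by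
      rw [hW, hW, ← Finset.sum_add_distrib, ← Finset.sum_add_distrib]
      apply Finset.sum_congr rfl
      intro i _
      rw [← Finset.sum_add_distrib, ← Finset.sum_add_distrib]
    rw [h2, h3] at h1
    have := herr_sum (Finset.Icc A B)
    linarith
  refine ⟨?_, ?_⟩
  · -- C1
    intro a b w hw hcov
    have hPmem : a ∈ (hsuppm.toFinset ∪ hsuppM.toFinset ∪ Finset.Icc a b ∪ {a, b} : Finset ℤ) := by
      simp
    set P : Finset ℤ := hsuppm.toFinset ∪ hsuppM.toFinset ∪ Finset.Icc a b ∪ {a, b} with hP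
    have hPne : P.Nonempty := ⟨a, hPmem⟩
    set α := P.min' hPne with hα
    set β := P.max' hPne with hβ
    have hαa : α ≤ a := Finset.min'_le P a hPmem
    have hbβ : b ≤ β := Finset.le_max' P b (by rw [hP]; simp)
    have hmemP : ∀ i ∈ P, α ≤ i ∧ i ≤ β :=
      fun i hi => ⟨Finset.min'_le P i hi, Finset.le_max' P i hi⟩
    -- first minimality
    have h1 : Wseg r f (α - r) β bm ≤ Wseg r f (α - r) β (m' + w) := by
      have hv : ∀ i, (fun i => m' i + w i - bm i) i ≠ 0 → i ∈ Finset.Icc α β := by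
        intro i hvi
        simp only at hvi
        have : m' i ≠ bm i ∨ w i ≠ 0 := by
          by_contra hcon
          push_neg at hcon
          apply hvi
          rw [hcon.1, hcon.2]
          ring
        have hiP : i ∈ P := by
          rcases this with h | h
          · have hSi : S i := by
              by_contra hS
              apply h
              rw [hm']
              simp [hS]
            have hne : m i ≠ bm i := by
              intro hc
              apply h
              rw [hm']
              simp [hSi, hc]
            rw [hP]
            have : i ∈ hsuppm.toFinset := by
              rw [Set.Finite.mem_toFinset]
              exact ⟨hSi, hne⟩
            simp [this]
          · rw [hP]
            have := hw i h
            simp [this]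
        rw [Finset.mem_Icc]
        exact hmemP i hiP
      have := hbm_min α β (fun i => m' i + w i - bm i) hv
      have heq : bm + (fun i => m' i + w i - bm i) = m' + w := by
        funext i
        simp only [Pi.add_apply]
        ring
      rwa [heq] at this
    -- second minimality
    have h2 : Wseg r f (α - r) β bM ≤ Wseg r f (α - r) β M' := by
      have hv : ∀ i, (fun i => M' i - bM i) i ≠ 0 → i ∈ Finset.Icc α β := by
        intro i hvi
        simp only at hvi
        have hSi : S i := by
          by_contra hS
          apply hvi
          rw [hM']
          simp [hS]
        have hne : Mx i ≠ bM i := by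
          intro hc
          apply hvi
          rw [hM']
          simp [hSi, hc]
        have hiP : i ∈ P := by
          rw [hP]
          have : i ∈ hsuppM.toFinset := by
            rw [Set.Finite.mem_toFinset]
            exact ⟨hSi, hne⟩
          simp [this]
        rw [Finset.mem_Icc]
        exact hmemP i hiP
      have := hbM_min α β (fun i => M' i - bM i) hv
      have heq : bM + (fun i => M' i - bM i) = M' := by
        funext i
        simp
      rwa [heq] at this
    have hkey := KeySum (α - r) β
    have hxy' := hxy (α - r) β
    have hstep : Wseg r f (α - r) β m' ≤ Wseg r f (α - r) β (m' + w) + K * r * ε * ε := by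
      linarith
    have hloc := Wseg_localize r f m' w hw (show α - (r:ℤ) ≤ a - (r:ℤ) by omega) hbβ
    have hsmall : Wseg r f (a - r) b m' ≤ Wseg r f (a - r) b (m' + w) + K * r * ε * ε := by
      linarith
    have hrepl : Wseg r f (a - r) b m' = Wseg r f (a - r) b m := by
      rw [hW, hW]
      apply Finset.sum_congr rfl
      intro i hi
      apply Finset.sum_congr rfl
      intro j hj
      rw [Finset.mem_Icc] at hi hj
      have hSi : S i := hcov i hi.1 (by omega)
      have hSij : S (i + (j:ℤ)) := hcov (i + (j:ℤ)) (by omega) (by omega)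
      rw [hm']
      simp only
      rw [if_pos hSi, if_pos hSij]
    have hreplw : Wseg r f (a - r) b (m' + w) = Wseg r f (a - r) b (m + w) := by
      rw [hW, hW]
      apply Finset.sum_congr rfl
      intro i hi
      apply Finset.sum_congr rfl
      intro j hj
      rw [Finset.mem_Icc] at hi hj
      have hSi : S i := hcov i hi.1 (by omega)
      have hSij : S (i + (j:ℤ)) := hcov (i + (j:ℤ)) (by omega) (by omega)
      have e1 : (m' + w) i = (m + w) i := by
        simp only [Pi.add_apply]
        rw [hm']
        simp only
        rw [if_pos hSi]
      have e2 : (m' + w) (i + (j:ℤ)) = (m + w) (i + (j:ℤ)) := by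
        simp only [Pi.add_apply]
        rw [hm']
        simp only
        rw [if_pos hSij]
      rw [e1, e2]
    rw [hrepl, hreplw] at hsmall
    exact hsmall
  · -- C2
    intro i0 j0 hj0 hSi0 hSij0 hcross
    -- strengthened term inequality at (i0, j0)
    set G : ℝ := lam * |x i0 - y i0| * |x (i0 + (j0:ℤ)) - y (i0 + (j0:ℤ))| with hG
    have hm'i0 : m' i0 = m i0 := by rw [hm']; simp [hSi0]
    have hM'i0 : M' i0 = Mx i0 := by rw [hM']; simp [hSi0]
    have hm'ij : m' (i0 + (j0:ℤ)) = m (i0 + (j0:ℤ)) := by rw [hm']; simp [hSij0]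
    have hM'ij : M' (i0 + (j0:ℤ)) = Mx (i0 + (j0:ℤ)) := by rw [hM']; simp [hSij0]
    have Hterm0 : f j0 (m' i0) (m' (i0 + (j0:ℤ))) + f j0 (M' i0) (M' (i0 + (j0:ℤ))) + G
        ≤ f j0 (x i0) (x (i0 + (j0:ℤ))) + f j0 (y i0) (y (i0 + (j0:ℤ))) + e i0 j0 := by
      have he0 : e i0 j0 = 0 := by
        rw [he]
        simp [iff_of_true hSi0 hSij0]
      rw [he0, add_zero, hm'i0, hM'i0, hm'ij, hM'ij]
      rcases mul_neg_iff.mp hcross with ⟨hpos, hneg⟩ | ⟨hneg, hpos⟩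
      · -- x i0 > y i0, x' < y'
        have hyx : y i0 ≤ x i0 := by linarith
        have hxy' : x (i0 + (j0:ℤ)) ≤ y (i0 + (j0:ℤ)) := by linarith
        have e1 : m i0 = y i0 := min_eq_right hyx
        have e2 : Mx i0 = x i0 := max_eq_left hyx
        have e3 : m (i0 + (j0:ℤ)) = x (i0 + (j0:ℤ)) := min_eq_left hxy'
        have e4 : Mx (i0 + (j0:ℤ)) = y (i0 + (j0:ℤ)) := max_eq_right hxy'
        rw [e1, e2, e3, e4]
        have hcr := cross_ineq (hsm j0) (htw j0 hj0) hyx hxy'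
        have habs1 : |x i0 - y i0| = x i0 - y i0 := abs_of_pos hpos
        have habs2 : |x (i0 + (j0:ℤ)) - y (i0 + (j0:ℤ))| = -(x (i0 + (j0:ℤ)) - y (i0 + (j0:ℤ))) :=
          abs_of_neg hneg
        rw [hG, habs1, habs2]
        nlinarith [hcr]
      · -- x i0 < y i0, x' > y'
        have hxy2 : x i0 ≤ y i0 := by linarith
        have hyx2 : y (i0 + (j0:ℤ)) ≤ x (i0 + (j0:ℤ)) := by linarith
        have e1 : m i0 = x i0 := min_eq_left hxy2
        have e2 : Mx i0 = y i0 := max_eq_right hxy2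
        have e3 : m (i0 + (j0:ℤ)) = y (i0 + (j0:ℤ)) := min_eq_right hyx2
        have e4 : Mx (i0 + (j0:ℤ)) = x (i0 + (j0:ℤ)) := max_eq_left hyx2
        rw [e1, e2, e3, e4]
        have hcr := cross_ineq (hsm j0) (htw j0 hj0) hxy2 hyx2
        have habs1 : |x i0 - y i0| = -(x i0 - y i0) := abs_of_neg hneg
        have habs2 : |x (i0 + (j0:ℤ)) - y (i0 + (j0:ℤ))| = x (i0 + (j0:ℤ)) - y (i0 + (j0:ℤ)) :=
          abs_of_pos hpos
        rw [hG, habs1, habs2]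
        nlinarith [hcr]
    -- window containing supports and i0
    have hPmem : i0 ∈ (hsuppm.toFinset ∪ hsuppM.toFinset ∪ {i0} : Finset ℤ) := by simp
    set P : Finset ℤ := hsuppm.toFinset ∪ hsuppM.toFinset ∪ {i0} with hP
    have hPne : P.Nonempty := ⟨i0, hPmem⟩
    set α := P.min' hPne with hα
    set β := P.max' hPne with hβ
    have hmemP : ∀ i ∈ P, α ≤ i ∧ i ≤ β :=
      fun i hi => ⟨Finset.min'_le P i hi, Finset.le_max' P i hi⟩
    have hi0αβ := hmemP i0 hPmem
    have hi0W : i0 ∈ Finset.Icc (α - (r:ℤ)) β := by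
      rw [Finset.mem_Icc]
      omega
    -- strengthened key sum
    have KeySum2 : Wseg r f (α - r) β m' + Wseg r f (α - r) β M' + G
        ≤ Wseg r f (α - r) β x + Wseg r f (α - r) β y + K * r * ε * ε := by
      set L : ℤ → ℝ := fun i => ∑ j ∈ Finset.Icc 1 r,
        (f j (m' i) (m' (i + (j:ℤ))) + f j (M' i) (M' (i + (j:ℤ)))) with hL
      set R : ℤ → ℝ := fun i => ∑ j ∈ Finset.Icc 1 r,
        (f j (x i) (x (i + (j:ℤ))) + f j (y i) (y (i + (j:ℤ))) + e i j) with hR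
      have hLR : ∀ i, L i ≤ R i := by
        intro i
        exact Finset.sum_le_sum (fun j hj => Hterm i j hj)
      have hLR0 : L i0 + G ≤ R i0 := by
        rw [hL, hR]
        simp only
        rw [← Finset.add_sum_erase _ _ hj0, ← Finset.add_sum_erase _ _ hj0]
        have hrest : ∑ j ∈ (Finset.Icc 1 r).erase j0,
            (f j (m' i0) (m' (i0 + (j:ℤ))) + f j (M' i0) (M' (i0 + (j:ℤ))))
            ≤ ∑ j ∈ (Finset.Icc 1 r).erase j0,
            (f j (x i0) (x (i0 + (j:ℤ))) + f j (y i0) (y (i0 + (j:ℤ))) + e i0 j) :=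
          Finset.sum_le_sum (fun j hj => Hterm i0 j (Finset.mem_of_mem_erase hj))
        linarith [Hterm0]
      have hsum1 : ∑ i ∈ Finset.Icc (α - (r:ℤ)) β, L i + G
          ≤ ∑ i ∈ Finset.Icc (α - (r:ℤ)) β, R i := by
        rw [← Finset.add_sum_erase _ _ hi0W, ← Finset.add_sum_erase _ _ hi0W]
        have hrest : ∑ i ∈ (Finset.Icc (α - (r:ℤ)) β).erase i0, L i
            ≤ ∑ i ∈ (Finset.Icc (α - (r:ℤ)) β).erase i0, R i :=
          Finset.sum_le_sum (fun i _ => hLR i)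
        linarith [hLR0]
      have h2 : ∑ i ∈ Finset.Icc (α - (r:ℤ)) β, L i
          = Wseg r f (α - r) β m' + Wseg r f (α - r) β M' := by
        rw [hW, hW, ← Finset.sum_add_distrib]
        apply Finset.sum_congr rfl
        intro i _
        rw [hL, ← Finset.sum_add_distrib]
      have h3 : ∑ i ∈ Finset.Icc (α - (r:ℤ)) β, R i
          = Wseg r f (α - r) β x + Wseg r f (α - r) β y
            + ∑ i ∈ Finset.Icc (α - (r:ℤ)) β, ∑ j ∈ Finset.Icc 1 r, e i j := by
        rw [hW, hW, ← Finset.sum_add_distrib, ← Finset.sum_add_distrib]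
        apply Finset.sum_congr rfl
        intro i _
        rw [hR, ← Finset.sum_add_distrib, ← Finset.sum_add_distrib]
      rw [h2, h3] at hsum1
      have := herr_sum (Finset.Icc (α - (r:ℤ)) β)
      linarith
    -- minimality with no variation
    have h1 : Wseg r f (α - r) β bm ≤ Wseg r f (α - r) β m' := by
      have hv : ∀ i, (fun i => m' i - bm i) i ≠ 0 → i ∈ Finset.Icc α β := by
        intro i hvi
        simp only at hvi
        have hSi : S i := by
          by_contra hS
          apply hvi
          rw [hm']
          simp [hS]
        have hne : m i ≠ bm i := by
          intro hc
          apply hvi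
          rw [hm']
          simp [hSi, hc]
        have hiP : i ∈ P := by
          rw [hP]
          have : i ∈ hsuppm.toFinset := by
            rw [Set.Finite.mem_toFinset]
            exact ⟨hSi, hne⟩
          simp [this]
        rw [Finset.mem_Icc]
        exact hmemP i hiP
      have := hbm_min α β (fun i => m' i - bm i) hv
      have heq : bm + (fun i => m' i - bm i) = m' := by
        funext i
        simp
      rwa [heq] at this
    have h2 : Wseg r f (α - r) β bM ≤ Wseg r f (α - r) β M' := by
      have hv : ∀ i, (fun i => M' i - bM i) i ≠ 0 → i ∈ Finset.Icc α β := by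
        intro i hvi
        simp only at hvi
        have hSi : S i := by
          by_contra hS
          apply hvi
          rw [hM']
          simp [hS]
        have hne : Mx i ≠ bM i := by
          intro hc
          apply hvi
          rw [hM']
          simp [hSi, hc]
        have hiP : i ∈ P := by
          rw [hP]
          have : i ∈ hsuppM.toFinset := by
            rw [Set.Finite.mem_toFinset]
            exact ⟨hSi, hne⟩
          simp [this]
        rw [Finset.mem_Icc]
        exact hmemP i hiP
      have := hbM_min α β (fun i => M' i - bM i) hv
      have heq : bM + (fun i => M' i - bM i) = M' := by
        funext i
        simp
      rwa [heq] at this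
    have hxy' := hxy (α - r) β
    rw [hG] at KeySum2
    linarith

-- helper for epsilon
lemma eps_choice (c ε0 : ℝ) (hc : 0 < c) (hε0 : 0 < ε0) :
    ∃ ε : ℝ, 0 < ε ∧ c * ε * ε ≤ ε0 := by
  refine ⟨min 1 (ε0 / c), lt_min one_pos (div_pos hε0 hc), ?_⟩
  have h1 : min 1 (ε0 / c) ≤ 1 := min_le_left _ _
  have h2 : min 1 (ε0 / c) ≤ ε0 / c := min_le_right _ _
  have h3 : 0 < min 1 (ε0 / c) := lt_min one_pos (div_pos hε0 hc)
  have : c * min 1 (ε0 / c) * min 1 (ε0 / c) ≤ c * (ε0 / c) * 1 := by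
    apply mul_le_mul _ h1 h3.le _
    · exact mul_le_mul_of_nonneg_left h2 hc.le
    · positivity
  calc c * min 1 (ε0 / c) * min 1 (ε0 / c) ≤ c * (ε0 / c) * 1 := this
    _ = ε0 := by field_simp

set_option maxHeartbeats 1000000 in
/-- Asymptotic global minimizers with finite crossing domain are ordered:  if
`|x_i - y_i| → 0` as `i → +∞` or as `i → -∞`, then `x ≥ y` or `y ≥ x` componentwise. -/
theorem stmt13 (r : ℕ) (hr : 1 ≤ r) (K lam : ℝ) (hK : 0 < K) (hlam : 0 < lam)
    (E : LocalEnergy r K lam) (x y : ℤ → ℝ)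
    (hx : IsGlobalMin r E.f x) (hy : IsGlobalMin r E.f y)
    (D : Set ℤ) (hD : IsCrossingDomain x y D) (hfin : D.Finite)
    (hasym : Tendsto (fun i : ℤ => |x i - y i|) atTop (𝓝 0) ∨
             Tendsto (fun i : ℤ => |x i - y i|) atBot (𝓝 0)) :
    (∀ i : ℤ, y i ≤ x i) ∨ (∀ i : ℤ, x i ≤ y i) := by
  classical
  have hKr : (0:ℝ) < K * r := by
    have : (0:ℝ) < (r:ℝ) := by exact_mod_cast hr
    positivity
  have main : IsGlobalMin r E.f (fun i => min (x i) (y i)) ∧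
      (∀ i : ℤ, ¬((x i - y i) * (x (i + 1) - y (i + 1)) < 0)) := by
    rcases hasym with htop | hbot
    · -- +∞ case : truncate on the right
      obtain ⟨p, hp⟩ : ∃ p : ℤ, ∀ j ∈ D, p ≤ j := by
        rcases hfin.bddBelow with ⟨p, hp⟩
        exact ⟨p, fun j hj => hp hj⟩
      obtain ⟨bm, bM, hb, htail⟩ : ∃ bm bM : ℤ → ℝ, ((bm = x ∧ bM = y) ∨ (bm = y ∧ bM = x)) ∧
          (∀ i : ℤ, i < p → min (x i) (y i) = bm i ∧ max (x i) (y i) = bM i) := by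
        rcases hD.1.2.1 with hcase | hcase
        · refine ⟨x, y, Or.inl ⟨rfl, rfl⟩, fun i hi => ?_⟩
          have hixy : x i ≤ y i := hcase i (fun j hj => lt_of_lt_of_le hi (hp j hj))
          exact ⟨min_eq_left hixy, max_eq_right hixy⟩
        · refine ⟨y, x, Or.inr ⟨rfl, rfl⟩, fun i hi => ?_⟩
          have hixy : y i ≤ x i := hcase i (fun j hj => lt_of_lt_of_le hi (hp j hj))
          exact ⟨min_eq_right hixy, max_eq_left hixy⟩
      have hsmall : ∀ ε : ℝ, 0 < ε → ∃ N : ℤ, ∀ i : ℤ, N ≤ i → |x i - y i| ≤ ε := by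
        intro ε hε
        obtain ⟨N, hN⟩ := Metric.tendsto_atTop.mp htop ε hε
        refine ⟨N, fun i hi => ?_⟩
        have := hN i hi
        rw [Real.dist_eq, sub_zero, abs_abs] at this
        exact this.le
      -- generic application of master
      have happ : ∀ ε : ℝ, 0 < ε → ∀ Bc : ℤ, ∃ B : ℤ, Bc ≤ B ∧
          ((∀ a b : ℤ, ∀ w : ℤ → ℝ, (∀ i, w i ≠ 0 → i ∈ Finset.Icc a b) →
            (∀ i : ℤ, a - r ≤ i → i ≤ b + r → i ≤ B) →
            Wseg r E.f (a - r) b (fun i => min (x i) (y i))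
              ≤ Wseg r E.f (a - r) b ((fun i => min (x i) (y i)) + w) + K * r * ε * ε)
          ∧ (∀ (i0 : ℤ) (j0 : ℕ), j0 ∈ Finset.Icc 1 r → i0 ≤ B → i0 + (j0:ℤ) ≤ B →
            (x i0 - y i0) * (x (i0 + (j0:ℤ)) - y (i0 + (j0:ℤ))) < 0 →
            lam * |x i0 - y i0| * |x (i0 + (j0:ℤ)) - y (i0 + (j0:ℤ))| ≤ K * r * ε * ε)) := by
        intro ε hε Bc
        obtain ⟨N, hN⟩ := hsmall ε hε
        refine ⟨max Bc (N + r), le_max_left _ _, ?_⟩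
        set B := max Bc (N + r) with hB
        have hNB : N + (r:ℤ) ≤ B := le_max_right _ _
        have := master r hr K lam hK hlam E.f E.smooth E.bound12 E.twist x y hx hy bm bM hb
          (fun i => i ≤ B) (fun i => Int.decLe i B) ε hε.le
          (?_) (?_)
          (?_)
          (Finset.Icc (B - r + 1) B) (?_) (?_)
        · exact this
        · -- hsuppm
          apply (Set.finite_Icc p B).subset
          rintro i ⟨hiB, hne⟩
          have hpi : p ≤ i := by
            by_contra hlt
            exact hne (htail i (by omega)).1
          exact Set.mem_Icc.mpr ⟨hpi, hiB⟩
        · -- hsuppM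
          apply (Set.finite_Icc p B).subset
          rintro i ⟨hiB, hne⟩
          have hpi : p ≤ i := by
            by_contra hlt
            exact hne (htail i (by omega)).2
          exact Set.mem_Icc.mpr ⟨hpi, hiB⟩
        · -- hmix
          intro i j hj hniff
          rw [Finset.mem_Icc] at hj
          have hij : ¬(i ≤ B ↔ i + (j:ℤ) ≤ B) := hniff
          have h1 : i ≤ B ∧ ¬(i + (j:ℤ) ≤ B) := by
            by_cases hiB : i ≤ B
            · refine ⟨hiB, fun hc => hij (iff_of_true hiB hc)⟩
            · exfalso
              apply hij
              constructor
              · intro h; exact absurd h hiB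
              · intro h; omega
          have hNi : N ≤ i := by omega
          have hNij : N ≤ i + (j:ℤ) := by omega
          exact ⟨hN i hNi, hN _ hNij⟩
        · -- card
          rw [Int.card_Icc]
          omega
        · -- hTs
          intro i j hj hniff
          rw [Finset.mem_Icc] at hj
          have h1 : i ≤ B ∧ ¬(i + (j:ℤ) ≤ B) := by
            by_cases hiB : i ≤ B
            · refine ⟨hiB, fun hc => hniff (iff_of_true hiB hc)⟩
            · exfalso
              apply hniff
              constructor
              · intro h; exact absurd h hiB
              · intro h; omega
          rw [Finset.mem_Icc]
          omega
      constructor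
      · -- global min
        intro a b v hv
        apply le_of_forall_pos_le_add
        intro ε0 hε0
        obtain ⟨ε, hεpos, hεle⟩ := eps_choice (K * r) ε0 hKr hε0
        obtain ⟨B, hBge, hC1, _⟩ := happ ε hεpos (b + r)
        have := hC1 a b v hv (fun i _ h2 => by omega)
        have harith : K * r * ε * ε ≤ ε0 := by nlinarith [hεle]
        linarith
      · -- no adjacent crossing
        intro i1
        intro hcr
        have habs : 0 < lam * |x i1 - y i1| * |x (i1 + 1) - y (i1 + 1)| := by
          rcases mul_neg_iff.mp hcr with ⟨ha, hb'⟩ | ⟨ha, hb'⟩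
          · have h1 : |x i1 - y i1| > 0 := abs_pos.mpr (ne_of_gt ha)
            have h2 : |x (i1 + 1) - y (i1 + 1)| > 0 := abs_pos.mpr (ne_of_lt hb')
            positivity
          · have h1 : |x i1 - y i1| > 0 := abs_pos.mpr (ne_of_lt ha)
            have h2 : |x (i1 + 1) - y (i1 + 1)| > 0 := abs_pos.mpr (ne_of_gt hb')
            positivity
        have hle0 : lam * |x i1 - y i1| * |x (i1 + 1) - y (i1 + 1)| ≤ 0 := by
          apply le_of_forall_pos_le_add
          intro ε0 hε0
          obtain ⟨ε, hεpos, hεle⟩ := eps_choice (K * r) ε0 hKr hε0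
          obtain ⟨B, hBge, _, hC2⟩ := happ ε hεpos (i1 + 1)
          have h1mem : (1:ℕ) ∈ Finset.Icc 1 r := by
            rw [Finset.mem_Icc]; omega
          have hcast : ((1:ℕ):ℤ) = (1:ℤ) := rfl
          have := hC2 i1 1 h1mem (by omega) (by rw [hcast]; omega)
            (by rw [hcast]; exact hcr)
          rw [hcast] at this
          linarith
        linarith
    · -- -∞ case : truncate on the left
      obtain ⟨q, hq⟩ : ∃ q : ℤ, ∀ j ∈ D, j ≤ q := by
        rcases hfin.bddAbove with ⟨q, hq⟩
        exact ⟨q, fun j hj => hq hj⟩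
      obtain ⟨bm, bM, hb, htail⟩ : ∃ bm bM : ℤ → ℝ, ((bm = x ∧ bM = y) ∨ (bm = y ∧ bM = x)) ∧
          (∀ i : ℤ, q < i → min (x i) (y i) = bm i ∧ max (x i) (y i) = bM i) := by
        rcases hD.1.2.2 with hcase | hcase
        · refine ⟨x, y, Or.inl ⟨rfl, rfl⟩, fun i hi => ?_⟩
          have hixy : x i ≤ y i := hcase i (fun j hj => lt_of_le_of_lt (hq j hj) hi)
          exact ⟨min_eq_left hixy, max_eq_right hixy⟩
        · refine ⟨y, x, Or.inr ⟨rfl, rfl⟩, fun i hi => ?_⟩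
          have hixy : y i ≤ x i := hcase i (fun j hj => lt_of_le_of_lt (hq j hj) hi)
          exact ⟨min_eq_right hixy, max_eq_left hixy⟩
      have hsmall : ∀ ε : ℝ, 0 < ε → ∃ N : ℤ, ∀ i : ℤ, i ≤ N → |x i - y i| ≤ ε := by
        intro ε hε
        obtain ⟨N, hN⟩ := (Filter.eventually_atBot).mp ((Metric.tendsto_nhds.mp hbot) ε hε)
        refine ⟨N, fun i hi => ?_⟩
        have := hN i hi
        rw [Real.dist_eq, sub_zero, abs_abs] at this
        exact this.le
      have happ : ∀ ε : ℝ, 0 < ε → ∀ Ac : ℤ, ∃ A : ℤ, A ≤ Ac ∧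
          ((∀ a b : ℤ, ∀ w : ℤ → ℝ, (∀ i, w i ≠ 0 → i ∈ Finset.Icc a b) →
            (∀ i : ℤ, a - r ≤ i → i ≤ b + r → A ≤ i) →
            Wseg r E.f (a - r) b (fun i => min (x i) (y i))
              ≤ Wseg r E.f (a - r) b ((fun i => min (x i) (y i)) + w) + K * r * ε * ε)
          ∧ (∀ (i0 : ℤ) (j0 : ℕ), j0 ∈ Finset.Icc 1 r → A ≤ i0 → A ≤ i0 + (j0:ℤ) →
            (x i0 - y i0) * (x (i0 + (j0:ℤ)) - y (i0 + (j0:ℤ))) < 0 →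
            lam * |x i0 - y i0| * |x (i0 + (j0:ℤ)) - y (i0 + (j0:ℤ))| ≤ K * r * ε * ε)) := by
        intro ε hε Ac
        obtain ⟨N, hN⟩ := hsmall ε hε
        refine ⟨min Ac (N - r + 1), min_le_left _ _, ?_⟩
        set A := min Ac (N - r + 1) with hA
        have hNA : A ≤ N - (r:ℤ) + 1 := min_le_right _ _
        have := master r hr K lam hK hlam E.f E.smooth E.bound12 E.twist x y hx hy bm bM hb
          (fun i => A ≤ i) (fun i => Int.decLe A i) ε hε.le
          (?_) (?_)
          (?_)
          (Finset.Icc (A - r) (A - 1)) (?_) (?_)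
        · exact this
        · -- hsuppm
          apply (Set.finite_Icc A q).subset
          rintro i ⟨hiA, hne⟩
          have hiq : i ≤ q := by
            by_contra hlt
            exact hne (htail i (by omega)).1
          exact Set.mem_Icc.mpr ⟨hiA, hiq⟩
        · -- hsuppM
          apply (Set.finite_Icc A q).subset
          rintro i ⟨hiA, hne⟩
          have hiq : i ≤ q := by
            by_contra hlt
            exact hne (htail i (by omega)).2
          exact Set.mem_Icc.mpr ⟨hiA, hiq⟩
        · -- hmix
          intro i j hj hniff
          rw [Finset.mem_Icc] at hj
          have h1 : ¬(A ≤ i) ∧ A ≤ i + (j:ℤ) := by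
            by_cases hiA : A ≤ i
            · exfalso
              apply hniff
              exact iff_of_true hiA (by omega)
            · refine ⟨hiA, ?_⟩
              by_contra hc
              exact hniff (iff_of_false hiA hc)
          constructor
          · apply hN
            omega
          · apply hN
            omega
        · -- card
          rw [Int.card_Icc]
          omega
        · -- hTs
          intro i j hj hniff
          rw [Finset.mem_Icc] at hj
          have h1 : ¬(A ≤ i) ∧ A ≤ i + (j:ℤ) := by
            by_cases hiA : A ≤ i
            · exfalso
              apply hniff
              exact iff_of_true hiA (by omega)
            · refine ⟨hiA, ?_⟩
              by_contra hc
              exact hniff (iff_of_false hiA hc)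
          rw [Finset.mem_Icc]
          omega
      constructor
      · intro a b v hv
        apply le_of_forall_pos_le_add
        intro ε0 hε0
        obtain ⟨ε, hεpos, hεle⟩ := eps_choice (K * r) ε0 hKr hε0
        obtain ⟨A, hAle, hC1, _⟩ := happ ε hεpos (a - r)
        have := hC1 a b v hv (fun i h1 _ => by omega)
        have harith : K * r * ε * ε ≤ ε0 := by nlinarith [hεle]
        linarith
      · intro i1
        intro hcr
        have habs : 0 < lam * |x i1 - y i1| * |x (i1 + 1) - y (i1 + 1)| := by
          rcases mul_neg_iff.mp hcr with ⟨ha, hb'⟩ | ⟨ha, hb'⟩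
          · have h1 : |x i1 - y i1| > 0 := abs_pos.mpr (ne_of_gt ha)
            have h2 : |x (i1 + 1) - y (i1 + 1)| > 0 := abs_pos.mpr (ne_of_lt hb')
            positivity
          · have h1 : |x i1 - y i1| > 0 := abs_pos.mpr (ne_of_lt ha)
            have h2 : |x (i1 + 1) - y (i1 + 1)| > 0 := abs_pos.mpr (ne_of_gt hb')
            positivity
        have hle0 : lam * |x i1 - y i1| * |x (i1 + 1) - y (i1 + 1)| ≤ 0 := by
          apply le_of_forall_pos_le_add
          intro ε0 hε0
          obtain ⟨ε, hεpos, hεle⟩ := eps_choice (K * r) ε0 hKr hε0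
          obtain ⟨A, hAle, _, hC2⟩ := happ ε hεpos i1
          have h1mem : (1:ℕ) ∈ Finset.Icc 1 r := by
            rw [Finset.mem_Icc]; omega
          have hcast : ((1:ℕ):ℤ) = (1:ℤ) := rfl
          have := hC2 i1 1 h1mem (by omega) (by rw [hcast]; omega)
            (by rw [hcast]; exact hcr)
          rw [hcast] at this
          linarith
        linarith
  obtain ⟨Gmin, NC⟩ := main
  by_contra hcon
  push_neg at hcon
  obtain ⟨⟨i1, h1⟩, ⟨i2, h2⟩⟩ := hcon
  by_cases hz : ∃ k, x k = y k
  · obtain ⟨k, hk⟩ := hz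
    have hELx := fun i => el_of_min r hr E.f E.smooth x hx i
    have hELm := fun i => el_of_min r hr E.f E.smooth _ Gmin i
    have hle : ∀ i, (fun i => min (x i) (y i)) i ≤ x i := fun i => min_le_left _ _
    have hkm : x k = (fun i => min (x i) (y i)) k := (min_eq_left (le_of_eq hk)).symm
    have hall := touch_all r hr lam hlam E.f E.smooth E.twist x
      (fun i => min (x i) (y i)) hELx hELm hle hkm
    have : x i2 ≤ y i2 := by
      have := hall i2
      rw [this]
      exact min_le_right _ _
    linarith
  · push_neg at hz
    have hne : ∀ i, x i - y i ≠ 0 := fun i => sub_ne_zero.mpr (hz i)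
    have h1' : x i1 - y i1 < 0 := by linarith
    have h2' : 0 < x i2 - y i2 := by linarith
    obtain ⟨c, hc⟩ := walk_exists (fun i => x i - y i) hne h1' h2'
    exact NC c hc
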